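/- Let α, β ∈ ℕ and n ≥ 1. Define Q_n^{α,β}(x) = q_n^{α,β}(x+1)P_{n-1}^{α,β+2}(x) with q_n^{α,β} = (α+β+2)_n (β+2)_{n-1} / (2·n!·(α+1)_{n-1}). Then the differential operator L̃ of order 2β+4 defined by L̃y(x) = ((x+1)/(x-1)^α) D_x^{β+2}{(x-1)^{α+β+2} D_x^{β+2}[(x+1)^{β+1} y(x)]} satisfies L̃ Q_n^{α,β}(x) = (n)_{β+2}(n+α)_{β+2} Q_n^{α,β}(x). -/

import Mathlib

noncomputable def poch (a : ℝ) (k : ℕ) : ℝ := (ascPochhammer ℝ k).eval a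

noncomputable def jacobiP (n : ℕ) (a b x : ℝ) : ℝ :=
  (poch (a + 1) n / (Nat.factorial n : ℝ)) *
    ∑ k ∈ Finset.range (n + 1),
      (poch (-(n : ℝ)) k * poch ((n : ℝ) + a + b + 1) k) /
        (poch (a + 1) k * (Nat.factorial k : ℝ)) * ((1 - x) / 2) ^ k

lemma poch_zero (a : ℝ) : poch a 0 = 1 := by simp [poch]

lemma poch_succ (a : ℝ) (k : ℕ) : poch a (k+1) = poch a k * (a + k) := by
  simp [poch, ascPochhammer_succ_eval]

lemma poch_succ_left (a : ℝ) (k : ℕ) : poch a (k+1) = a * poch (a+1) k := by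
  simp [poch, ascPochhammer_succ_left, Polynomial.eval_comp]

lemma poch_pos {a : ℝ} (ha : 0 < a) (k : ℕ) : 0 < poch a k := by
  induction k with
  | zero => simp [poch_zero]
  | succ k ih => rw [poch_succ]; exact mul_pos ih (by positivity)

lemma poch_neg_self (n : ℕ) : poch (-(n:ℝ)) (n+1) = 0 := by
  rw [poch_succ]; simp

lemma pochkey (a : ℝ) (n k : ℕ) :
    poch (a+1) n * ((a + k) * poch a k) = ((a + n) * poch a n) * poch (a+1) k := by
  have h1 : (a + (k:ℝ)) * poch a k = a * poch (a+1) k := by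
    rw [mul_comm, ← poch_succ, poch_succ_left]
  have h2 : (a + (n:ℝ)) * poch a n = a * poch (a+1) n := by
    rw [mul_comm, ← poch_succ, poch_succ_left]
  rw [h1, h2]; ring

lemma keyA (m n k : ℕ) (σ : ℝ) :
    poch ((m:ℝ)+1+1) n / (Nat.factorial n : ℝ) *
      ((poch (-(n:ℝ)) k * poch σ k) / (poch ((m:ℝ)+1+1) k * (Nat.factorial k : ℝ))) *
        (((m:ℝ)+1) + k)
    = ((n:ℝ) + ((m:ℝ)+1)) * (poch ((m:ℝ)+1) n / (Nat.factorial n : ℝ) *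
      ((poch (-(n:ℝ)) k * poch σ k) / (poch ((m:ℝ)+1) k * (Nat.factorial k : ℝ)))) := by
  have h1 : poch ((m:ℝ)+1) k ≠ 0 := ne_of_gt (poch_pos (by positivity) k)
  have h2 : poch ((m:ℝ)+1+1) k ≠ 0 := ne_of_gt (poch_pos (by positivity) k)
  have h3 : (Nat.factorial n : ℝ) ≠ 0 := Nat.cast_ne_zero.2 (Nat.factorial_ne_zero n)
  have h4 : (Nat.factorial k : ℝ) ≠ 0 := Nat.cast_ne_zero.2 (Nat.factorial_ne_zero k)
  have key := pochkey ((m:ℝ)+1) n k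
  field_simp
  linear_combination (poch (-(n:ℝ)) k * poch σ k) * key

lemma lemA (n m : ℕ) (b x : ℝ) :
    HasDerivAt (fun s => (s-1)^(m+1) * jacobiP n ((m:ℝ)+1) b s)
      (((n:ℝ) + ((m:ℝ)+1)) * ((x-1)^m * jacobiP n (m:ℝ) (b+1) x)) x := by
  have hu : HasDerivAt (fun s : ℝ => (1-s)/2) (-(1/2)) x := by
    simpa [neg_div] using ((hasDerivAt_const x (1:ℝ)).sub (hasDerivAt_id x)).div_const 2
  have hJ : HasDerivAt (fun s => jacobiP n ((m:ℝ)+1) b s)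
      (poch ((m:ℝ)+1+1) n / (Nat.factorial n : ℝ) *
        ∑ k ∈ Finset.range (n+1),
          (poch (-(n:ℝ)) k * poch ((n:ℝ)+((m:ℝ)+1)+b+1) k) /
            (poch ((m:ℝ)+1+1) k * (Nat.factorial k : ℝ)) *
          ((k:ℝ) * ((1-x)/2)^(k-1) * (-(1/2)))) x := by
    unfold jacobiP
    exact (HasDerivAt.fun_sum (fun k _ => (hu.pow k).const_mul _)).const_mul _
  have h1 : HasDerivAt (fun s : ℝ => (s-1)^(m+1))
      (((m+1 : ℕ):ℝ) * (x-1)^(m+1-1) * 1) x :=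
    ((hasDerivAt_id x).sub_const 1).pow (m+1)
  have h : HasDerivAt (fun s => (s-1)^(m+1) * jacobiP n ((m:ℝ)+1) b s) _ x := h1.mul hJ
  convert h using 1
  -- now pure value identity
  simp only [Nat.add_sub_cancel, mul_one, Nat.cast_add, Nat.cast_one]
  -- key sum facts
  have hD2 : (x-1) * ∑ k ∈ Finset.range (n+1),
      (poch (-(n:ℝ)) k * poch ((n:ℝ)+((m:ℝ)+1)+b+1) k) /
        (poch ((m:ℝ)+1+1) k * (Nat.factorial k : ℝ)) *
        ((k:ℝ) * ((1-x)/2)^(k-1) * (-(1/2)))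
      = ∑ k ∈ Finset.range (n+1),
      (poch (-(n:ℝ)) k * poch ((n:ℝ)+((m:ℝ)+1)+b+1) k) /
        (poch ((m:ℝ)+1+1) k * (Nat.factorial k : ℝ)) *
        ((k:ℝ) * ((1-x)/2)^k) := by
    rw [Finset.mul_sum]
    refine Finset.sum_congr rfl fun k _ => ?_
    cases k with
    | zero => simp
    | succ j =>
      simp only [Nat.add_sub_cancel]
      push_cast
      ring
  have hmain : ((m:ℝ)+1) * (poch ((m:ℝ)+1+1) n / (Nat.factorial n : ℝ) *
        ∑ k ∈ Finset.range (n+1),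
          (poch (-(n:ℝ)) k * poch ((n:ℝ)+((m:ℝ)+1)+b+1) k) /
            (poch ((m:ℝ)+1+1) k * (Nat.factorial k : ℝ)) * ((1-x)/2)^k)
      + poch ((m:ℝ)+1+1) n / (Nat.factorial n : ℝ) *
        ∑ k ∈ Finset.range (n+1),
          (poch (-(n:ℝ)) k * poch ((n:ℝ)+((m:ℝ)+1)+b+1) k) /
            (poch ((m:ℝ)+1+1) k * (Nat.factorial k : ℝ)) * ((k:ℝ) * ((1-x)/2)^k)
      = ((n:ℝ)+((m:ℝ)+1)) * (poch ((m:ℝ)+1) n / (Nat.factorial n : ℝ) *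
        ∑ k ∈ Finset.range (n+1),
          (poch (-(n:ℝ)) k * poch ((n:ℝ)+(m:ℝ)+(b+1)+1) k) /
            (poch ((m:ℝ)+1) k * (Nat.factorial k : ℝ)) * ((1-x)/2)^k) := by
    simp only [Finset.mul_sum]
    rw [← Finset.sum_add_distrib]
    refine Finset.sum_congr rfl fun k _ => ?_
    have hσ : ((n:ℝ)+(m:ℝ)+(b+1)+1) = ((n:ℝ)+((m:ℝ)+1)+b+1) := by ring
    rw [hσ]
    have hk := keyA m n k ((n:ℝ)+((m:ℝ)+1)+b+1)
    linear_combination ((1-x)/2)^k * hk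
  unfold jacobiP
  rw [pow_succ]
  linear_combination (-(x-1)^m) * hmain - ((x-1)^m * (poch ((m:ℝ)+1+1) n / (Nat.factorial n : ℝ))) * hD2

lemma keyB (n k m : ℕ) (a : ℝ) (ha : 0 ≤ a) :
    poch (a+1) n / (Nat.factorial n : ℝ) *
      ((((m:ℝ)+1)+(k:ℝ)) * (poch (-(n:ℝ)) k * poch ((n:ℝ)+a+((m:ℝ)+1)+1) k /
          (poch (a+1) k * (Nat.factorial k : ℝ)))
        - ((k:ℝ)+1) * (poch (-(n:ℝ)) (k+1) * poch ((n:ℝ)+a+((m:ℝ)+1)+1) (k+1) /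
          (poch (a+1) (k+1) * (Nat.factorial (k+1) : ℝ))))
    = ((n:ℝ)+((m:ℝ)+1)) * (poch (a+1+1) n / (Nat.factorial n : ℝ) *
        (poch (-(n:ℝ)) k * poch ((n:ℝ)+(a+1)+(m:ℝ)+1) k /
          (poch (a+1+1) k * (Nat.factorial k : ℝ)))) := by
  have hσ : ((n:ℝ)+(a+1)+(m:ℝ)+1) = ((n:ℝ)+a+((m:ℝ)+1)+1) := by ring
  rw [hσ]
  rw [poch_succ (-(n:ℝ)) k, poch_succ ((n:ℝ)+a+((m:ℝ)+1)+1) k, poch_succ (a+1) k]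
  have h1 : poch (a+1) k ≠ 0 := ne_of_gt (poch_pos (by positivity) k)
  have h2 : poch (a+1+1) k ≠ 0 := ne_of_gt (poch_pos (by positivity) k)
  have h3 : (Nat.factorial n : ℝ) ≠ 0 := Nat.cast_ne_zero.2 (Nat.factorial_ne_zero n)
  have h4 : (Nat.factorial k : ℝ) ≠ 0 := Nat.cast_ne_zero.2 (Nat.factorial_ne_zero k)
  have h5 : a + 1 + (k:ℝ) ≠ 0 := by positivity
  have h6 : (Nat.factorial (k+1) : ℝ) = ((k:ℝ)+1) * (Nat.factorial k : ℝ) := by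
    rw [Nat.factorial_succ]; push_cast; ring
  rw [h6]
  have R1 : poch (a+1) n * (a+1+(n:ℝ)) = (a+1) * poch (a+1+1) n := by
    rw [← poch_succ, poch_succ_left]
  have R2 : poch (a+1) k * (a+1+(k:ℝ)) = (a+1) * poch (a+1+1) k := by
    rw [← poch_succ, poch_succ_left]
  field_simp
  linear_combination
      (((n:ℝ)+((m:ℝ)+1)) * (poch (-(n:ℝ)) k * poch ((n:ℝ)+a+((m:ℝ)+1)+1) k) *
        poch (a+1+1) k) * R1
    - (((n:ℝ)+((m:ℝ)+1)) * (poch (-(n:ℝ)) k * poch ((n:ℝ)+a+((m:ℝ)+1)+1) k) *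
        poch (a+1+1) n) * R2

lemma lemB (n m : ℕ) (a : ℝ) (ha : 0 ≤ a) (x : ℝ) :
    HasDerivAt (fun s => (s+1)^(m+1) * jacobiP n a ((m:ℝ)+1) s)
      (((n:ℝ)+((m:ℝ)+1)) * ((x+1)^m * jacobiP n (a+1) (m:ℝ) x)) x := by
  have hu : HasDerivAt (fun s : ℝ => (1-s)/2) (-(1/2)) x := by
    simpa [neg_div] using ((hasDerivAt_const x (1:ℝ)).sub (hasDerivAt_id x)).div_const 2
  have hJ : HasDerivAt (fun s => jacobiP n a ((m:ℝ)+1) s)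
      (poch (a+1) n / (Nat.factorial n : ℝ) *
        ∑ k ∈ Finset.range (n+1),
          (poch (-(n:ℝ)) k * poch ((n:ℝ)+a+((m:ℝ)+1)+1) k) /
            (poch (a+1) k * (Nat.factorial k : ℝ)) *
          ((k:ℝ) * ((1-x)/2)^(k-1) * (-(1/2)))) x := by
    unfold jacobiP
    exact (HasDerivAt.fun_sum (fun k _ => (hu.pow k).const_mul _)).const_mul _
  have h1 : HasDerivAt (fun s : ℝ => (s+1)^(m+1))
      (((m+1 : ℕ):ℝ) * (x+1)^(m+1-1) * 1) x :=
    ((hasDerivAt_id x).add_const 1).pow (m+1)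
  have h : HasDerivAt (fun s => (s+1)^(m+1) * jacobiP n a ((m:ℝ)+1) s) _ x := h1.mul hJ
  convert h using 1
  simp only [Nat.add_sub_cancel, mul_one, Nat.cast_add, Nat.cast_one]
  have hD2 : (x+1) * ∑ k ∈ Finset.range (n+1),
      (poch (-(n:ℝ)) k * poch ((n:ℝ)+a+((m:ℝ)+1)+1) k) /
        (poch (a+1) k * (Nat.factorial k : ℝ)) *
        ((k:ℝ) * ((1-x)/2)^(k-1) * (-(1/2)))
      = (∑ k ∈ Finset.range (n+1),
          (poch (-(n:ℝ)) k * poch ((n:ℝ)+a+((m:ℝ)+1)+1) k) /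
            (poch (a+1) k * (Nat.factorial k : ℝ)) * ((k:ℝ) * ((1-x)/2)^k))
        - (∑ k ∈ Finset.range (n+1),
          (poch (-(n:ℝ)) k * poch ((n:ℝ)+a+((m:ℝ)+1)+1) k) /
            (poch (a+1) k * (Nat.factorial k : ℝ)) * ((k:ℝ) * ((1-x)/2)^(k-1))) := by
    rw [Finset.mul_sum, ← Finset.sum_sub_distrib]
    refine Finset.sum_congr rfl fun k _ => ?_
    cases k with
    | zero => simp
    | succ j =>
      simp only [Nat.add_sub_cancel]
      push_cast
      ring
  have hshift : (∑ k ∈ Finset.range (n+1),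
        (poch (-(n:ℝ)) k * poch ((n:ℝ)+a+((m:ℝ)+1)+1) k) /
          (poch (a+1) k * (Nat.factorial k : ℝ)) * ((k:ℝ) * ((1-x)/2)^(k-1)))
      = (∑ k ∈ Finset.range (n+1),
        (poch (-(n:ℝ)) (k+1) * poch ((n:ℝ)+a+((m:ℝ)+1)+1) (k+1)) /
          (poch (a+1) (k+1) * (Nat.factorial (k+1) : ℝ)) * (((k:ℝ)+1) * ((1-x)/2)^k)) := by
    rw [Finset.sum_range_succ' (fun k =>
      (poch (-(n:ℝ)) k * poch ((n:ℝ)+a+((m:ℝ)+1)+1) k) /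
        (poch (a+1) k * (Nat.factorial k : ℝ)) * ((k:ℝ) * ((1-x)/2)^(k-1))) n]
    rw [Finset.sum_range_succ (fun k =>
      (poch (-(n:ℝ)) (k+1) * poch ((n:ℝ)+a+((m:ℝ)+1)+1) (k+1)) /
        (poch (a+1) (k+1) * (Nat.factorial (k+1) : ℝ)) * (((k:ℝ)+1) * ((1-x)/2)^k)) n]
    simp only [Nat.add_sub_cancel, Nat.cast_zero, zero_mul, mul_zero, add_zero,
      Nat.cast_add, Nat.cast_one, poch_neg_self, zero_mul, zero_div, mul_zero, zero_mul]
  have hmain : ((m:ℝ)+1) * (poch (a+1) n / (Nat.factorial n : ℝ) *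
        ∑ k ∈ Finset.range (n+1),
          (poch (-(n:ℝ)) k * poch ((n:ℝ)+a+((m:ℝ)+1)+1) k) /
            (poch (a+1) k * (Nat.factorial k : ℝ)) * ((1-x)/2)^k)
      + poch (a+1) n / (Nat.factorial n : ℝ) *
        (∑ k ∈ Finset.range (n+1),
          (poch (-(n:ℝ)) k * poch ((n:ℝ)+a+((m:ℝ)+1)+1) k) /
            (poch (a+1) k * (Nat.factorial k : ℝ)) * ((k:ℝ) * ((1-x)/2)^k))
      - poch (a+1) n / (Nat.factorial n : ℝ) *
        (∑ k ∈ Finset.range (n+1),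
          (poch (-(n:ℝ)) (k+1) * poch ((n:ℝ)+a+((m:ℝ)+1)+1) (k+1)) /
            (poch (a+1) (k+1) * (Nat.factorial (k+1) : ℝ)) * (((k:ℝ)+1) * ((1-x)/2)^k))
      = ((n:ℝ)+((m:ℝ)+1)) * (poch (a+1+1) n / (Nat.factorial n : ℝ) *
        ∑ k ∈ Finset.range (n+1),
          (poch (-(n:ℝ)) k * poch ((n:ℝ)+(a+1)+(m:ℝ)+1) k) /
            (poch (a+1+1) k * (Nat.factorial k : ℝ)) * ((1-x)/2)^k) := by
    simp only [Finset.mul_sum]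
    rw [← Finset.sum_add_distrib, ← Finset.sum_sub_distrib]
    refine Finset.sum_congr rfl fun k _ => ?_
    have hk := keyB n k m a ha
    linear_combination ((1-x)/2)^k * hk
  unfold jacobiP
  rw [pow_succ]
  linear_combination (-(x+1)^m) * hmain
    + (-(x+1)^m * (poch (a+1) n / (Nat.factorial n : ℝ))) * hD2
    + ((x+1)^m * (poch (a+1) n / (Nat.factorial n : ℝ))) * hshift

lemma lemBiter (n b : ℕ) (a c : ℝ) (ha : 0 ≤ a) :
    ∀ j, j ≤ b → ∀ x : ℝ,
      deriv^[j] (fun s => c * ((s+1)^b * jacobiP n a (b:ℝ) s)) x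
        = c * poch ((n:ℝ) + ((b-j : ℕ):ℝ) + 1) j *
            ((x+1)^(b-j) * jacobiP n (a + (j:ℝ)) ((b-j : ℕ):ℝ) x) := by
  intro j
  induction j with
  | zero =>
    intro _ x
    simp [poch_zero]
  | succ j IH =>
    intro hj x
    rw [Function.iterate_succ_apply']
    have hfun : deriv^[j] (fun s => c * ((s+1)^b * jacobiP n a (b:ℝ) s))
        = fun y => (c * poch ((n:ℝ) + ((b-j : ℕ):ℝ) + 1) j) *
            ((y+1)^(b-j) * jacobiP n (a + (j:ℝ)) ((b-j : ℕ):ℝ) y) :=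
      funext fun y => IH (by omega) y
    rw [hfun]
    set m := b - (j+1) with hm
    have hbj : b - j = m + 1 := by omega
    rw [hbj]
    simp only [Nat.cast_add, Nat.cast_one]
    rw [((lemB n m (a + (j:ℝ)) (by positivity) x).const_mul
      (c * poch ((n:ℝ) + ((m:ℝ)+1) + 1) j)).deriv]
    rw [show (a + (j:ℝ) + 1) = a + ((j:ℝ)+1) by ring]
    rw [poch_succ_left ((n:ℝ)+(m:ℝ)+1) j]
    rw [show ((n:ℝ) + ((m:ℝ)+1) + 1) = (n:ℝ)+(m:ℝ)+1+1 by ring]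
    ring

lemma lemAiter (n a : ℕ) (b c : ℝ) :
    ∀ j, j ≤ a → ∀ x : ℝ,
      deriv^[j] (fun s => c * ((s-1)^a * jacobiP n (a:ℝ) b s)) x
        = c * poch ((n:ℝ) + ((a-j : ℕ):ℝ) + 1) j *
            ((x-1)^(a-j) * jacobiP n ((a-j : ℕ):ℝ) (b + (j:ℝ)) x) := by
  intro j
  induction j with
  | zero =>
    intro _ x
    simp [poch_zero]
  | succ j IH =>
    intro hj x
    rw [Function.iterate_succ_apply']
    have hfun : deriv^[j] (fun s => c * ((s-1)^a * jacobiP n (a:ℝ) b s))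
        = fun y => (c * poch ((n:ℝ) + ((a-j : ℕ):ℝ) + 1) j) *
            ((y-1)^(a-j) * jacobiP n ((a-j : ℕ):ℝ) (b + (j:ℝ)) y) :=
      funext fun y => IH (by omega) y
    rw [hfun]
    set m := a - (j+1) with hm
    have haj : a - j = m + 1 := by omega
    rw [haj]
    simp only [Nat.cast_add, Nat.cast_one]
    rw [((lemA n m (b + (j:ℝ)) x).const_mul
      (c * poch ((n:ℝ) + ((m:ℝ)+1) + 1) j)).deriv]
    rw [show (b + (j:ℝ) + 1) = b + ((j:ℝ)+1) by ring]
    rw [poch_succ_left ((n:ℝ)+(m:ℝ)+1) j]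
    rw [show ((n:ℝ) + ((m:ℝ)+1) + 1) = (n:ℝ)+(m:ℝ)+1+1 by ring]
    ring

/-- the operator `L̃` of order `2β+4` has `Q_n^{α,β}` as eigenfunction with
eigenvalue `(n)_{β+2}(n+α)_{β+2}`. -/
theorem Q_eigen (α β n : ℕ) (hn : 1 ≤ n) :
    let q : ℝ := poch ((α : ℝ) + (β : ℝ) + 2) n * poch ((β : ℝ) + 2) (n - 1) /
      (2 * (Nat.factorial n : ℝ) * poch ((α : ℝ) + 1) (n - 1))
    let Q : ℝ → ℝ := fun x => q * (x + 1) * jacobiP (n - 1) (α : ℝ) ((β : ℝ) + 2) x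
    ∀ x ∈ Set.Ioo (-1 : ℝ) 1,
      ((x + 1) / (x - 1) ^ α) *
        deriv^[β + 2] (fun t => (t - 1) ^ (α + β + 2) *
          deriv^[β + 2] (fun s => (s + 1) ^ (β + 1) * Q s) t) x
      = poch (n : ℝ) (β + 2) * poch ((n : ℝ) + (α : ℝ)) (β + 2) * Q x := by
  intro q Q x hx
  have hncast : ((n - 1 : ℕ) : ℝ) = (n : ℝ) - 1 := by
    rw [Nat.cast_sub hn]; norm_num
  have hQfun : (fun s => (s + 1) ^ (β + 1) * Q s)
      = fun s => q * ((s + 1) ^ (β + 2) * jacobiP (n - 1) (α : ℝ) ((β + 2 : ℕ) : ℝ) s) := by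
    funext s
    simp only [Q]
    have e : ((β + 2 : ℕ) : ℝ) = (β : ℝ) + 2 := by push_cast; ring
    rw [e, pow_succ]
    ring
  rw [hQfun]
  have hinner : ∀ t : ℝ,
      deriv^[β + 2] (fun s => q * ((s + 1) ^ (β + 2) * jacobiP (n - 1) (α : ℝ) ((β + 2 : ℕ) : ℝ) s)) t
        = (q * poch (n : ℝ) (β + 2)) * jacobiP (n - 1) ((α + β + 2 : ℕ) : ℝ) 0 t := by
    intro t
    have h := lemBiter (n - 1) (β + 2) (α : ℝ) q (by positivity) (β + 2) le_rfl t
    simp only [Nat.sub_self, Nat.cast_zero, pow_zero, one_mul] at h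
    rw [h]
    have e1 : ((n - 1 : ℕ) : ℝ) + 0 + 1 = (n : ℝ) := by rw [hncast]; ring
    have e2 : (α : ℝ) + ((β + 2 : ℕ) : ℝ) = ((α + β + 2 : ℕ) : ℝ) := by push_cast; ring
    rw [e1, e2]
  have houter : (fun t => (t - 1) ^ (α + β + 2) *
        deriv^[β + 2] (fun s => q * ((s + 1) ^ (β + 2) * jacobiP (n - 1) (α : ℝ) ((β + 2 : ℕ) : ℝ) s)) t)
      = fun t => (q * poch (n : ℝ) (β + 2)) *
          ((t - 1) ^ (α + β + 2) * jacobiP (n - 1) ((α + β + 2 : ℕ) : ℝ) 0 t) := by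
    funext t
    rw [hinner t]
    ring
  rw [houter]
  have h2 := lemAiter (n - 1) (α + β + 2) 0 (q * poch (n : ℝ) (β + 2)) (β + 2) (by omega) x
  have e3 : α + β + 2 - (β + 2) = α := by omega
  rw [e3] at h2
  have e4 : ((n - 1 : ℕ) : ℝ) + ((α : ℕ) : ℝ) + 1 = (n : ℝ) + (α : ℝ) := by rw [hncast]; ring
  rw [e4] at h2
  have e5 : (0 : ℝ) + ((β + 2 : ℕ) : ℝ) = (β : ℝ) + 2 := by push_cast; ring
  rw [e5] at h2
  rw [h2]
  simp only [Q]
  have hx2 : (x - 1) ^ α ≠ 0 := pow_ne_zero _ (by have := hx.2; intro h; nlinarith)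
  field_simp
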